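/- In the min-based reduction instance built from a simple graph H = (V, E) and an odd integer k ≥ 3, suppose K ⊆ V is a clique of size k in H. Let C consist of the vertex players v' for v ∈ K, the edge players e' for all edges e of H with both endpoints in K, the incidence players b_{x,e} and b_{y,e} for each such edge e = xy, and all dummy players of A_e for each such edge e. Then |C| = k + k·(k choose 2), every player i ∈ C satisfies util_i(C) = (k−1)·n − (|C| − k) under min-EQ utilities, and C blocks the coalition structure Γ both under min-EQ utilities and under min-AL utilities with any fixed weight w ≥ n^4. -/

import Mathlib

open Finset
open scoped Classical

section AHGDefs

variable {N : Type*} [Fintype N] [DecidableEq N]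

/-- The set of friends of player `i` inside coalition `C`. -/
noncomputable def friendsIn (G : SimpleGraph N) (C : Finset N) (i : N) : Finset N :=
  C.filter fun j => G.Adj i j

/-- The friend-oriented valuation of coalition `C` by player `i`:
`val_i(C) = n·|F_i ∩ C| − |E_i ∩ C|`. -/
noncomputable def fval (G : SimpleGraph N) (C : Finset N) (i : N) : ℤ :=
  (Fintype.card N : ℤ) * ((friendsIn G C i).card : ℤ)
    - ((C.filter fun j => ¬ G.Adj i j ∧ j ≠ i).card : ℤ)

/-- Average-based equal-treatment utility. -/
noncomputable def utilAvgEQ (G : SimpleGraph N) (C : Finset N) (i : N) : ℚ :=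
  (∑ c ∈ insert i (friendsIn G C i), (fval G C c : ℚ)) /
    ((insert i (friendsIn G C i)).card : ℚ)

/-- Average-based altruistic-treatment utility with weight `w`. -/
noncomputable def utilAvgAL (G : SimpleGraph N) (w : ℚ) (C : Finset N) (i : N) : ℚ :=
  (fval G C i : ℚ) +
    w * (if (friendsIn G C i).Nonempty then
          (∑ c ∈ friendsIn G C i, (fval G C c : ℚ)) / ((friendsIn G C i).card : ℚ)
         else 0)

/-- Min-based equal-treatment utility. -/
noncomputable def utilMinEQ (G : SimpleGraph N) (C : Finset N) (i : N) : ℤ :=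
  (insert i (friendsIn G C i)).inf' (insert_nonempty _ _) (fval G C)

/-- Min-based altruistic-treatment utility with weight `w`. -/
noncomputable def utilMinAL (G : SimpleGraph N) (w : ℤ) (C : Finset N) (i : N) : ℤ :=
  fval G C i +
    w * (if h : (friendsIn G C i).Nonempty then (friendsIn G C i).inf' h (fval G C) else 0)

/-- A coalition structure (partition of the players), given as the map sending
each player to its coalition. -/
structure CoalitionStructure (N : Type*) [Fintype N] [DecidableEq N] where
  part : N → Finset N
  mem_part : ∀ i, i ∈ part i
  part_eq : ∀ i j, j ∈ part i → part j = part i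

/-- A (nonempty) coalition `C` blocks the coalition structure `Γ`. -/
def Blocks {α : Type*} [LT α] (util : Finset N → N → α) (Γ : CoalitionStructure N)
    (C : Finset N) : Prop :=
  C.Nonempty ∧ ∀ i ∈ C, util (Γ.part i) i < util C i

/-- Core stability: no nonempty coalition blocks `Γ`. -/
def CoreStable {α : Type*} [LT α] (util : Finset N → N → α)
    (Γ : CoalitionStructure N) : Prop :=
  ¬ ∃ C : Finset N, Blocks util Γ C

/-- Cyclic distance between two positions on a cycle of length `k'`. -/
def cycDist (k' : ℕ) (a b : Fin k') : ℕ :=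
  min ((a.val + k' - b.val) % k') ((b.val + k' - a.val) % k')

/-- `P` carries an `(r,k')`-circulant gadget of `G`: its `k'` players are arranged
along a cycle of length `k'`, and two players are adjacent iff their distance along
the cycle is at most `r/2` (so each player has `r` friends in the gadget). -/
def IsCirculantGadget (G : SimpleGraph N) (r k' : ℕ) (P : Finset N) : Prop :=
  ∃ f : Fin k' → N, Function.Injective f ∧ Finset.univ.image f = P ∧
    ∀ a b : Fin k', (G.Adj (f a) (f b) ↔ (a ≠ b ∧ cycDist k' a b ≤ r / 2))

/-- The gadget size `k' = k·(k choose 2) + k + 1` of the min-based reduction. -/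
def minK' (k : ℕ) : ℕ := k * Nat.choose k 2 + k + 1

variable {V : Type*} [Fintype V] [DecidableEq V]

/-- The min-based reduction instance built from the graph `H` and an odd `k ≥ 3`:
`G` is the constructed network of friends on the player set `N`; `Pv v`, `Pe e`, and
`Pve v e` are the player sets of the `(k−1,k')`-circulant vertex, edge, and incidence
gadgets with distinguished players `vp v`, `ep e`, and `bp v e` respectively; `Ae e`
are the `k−3` dummy players of edge `e`, forming a clique. Each `bp v e` is further
adjacent to `vp v` and `ep e`, each dummy in `Ae e` to `ep e` and to both incidence
players of `e`, and there are no other edges. -/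
structure MinReduction (H : SimpleGraph V) (k : ℕ) (G : SimpleGraph N)
    (Pv : V → Finset N) (Pe : Sym2 V → Finset N) (Pve : V → Sym2 V → Finset N)
    (Ae : Sym2 V → Finset N) (vp : V → N) (ep : Sym2 V → N) (bp : V → Sym2 V → N) :
    Prop where
  circ_v : ∀ v : V, IsCirculantGadget G (k - 1) (minK' k) (Pv v)
  circ_e : ∀ e ∈ H.edgeSet, IsCirculantGadget G (k - 1) (minK' k) (Pe e)
  circ_ve : ∀ (v : V), ∀ e ∈ H.edgeSet, v ∈ e →
    IsCirculantGadget G (k - 1) (minK' k) (Pve v e)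
  vp_mem : ∀ v : V, vp v ∈ Pv v
  ep_mem : ∀ e ∈ H.edgeSet, ep e ∈ Pe e
  bp_mem : ∀ (v : V), ∀ e ∈ H.edgeSet, v ∈ e → bp v e ∈ Pve v e
  Ae_card : ∀ e ∈ H.edgeSet, (Ae e).card = k - 3
  Ae_clique : ∀ e ∈ H.edgeSet, ∀ a ∈ Ae e, ∀ b ∈ Ae e, a ≠ b → G.Adj a b
  disj_vv : ∀ v w : V, v ≠ w → Disjoint (Pv v) (Pv w)
  disj_ee : ∀ e ∈ H.edgeSet, ∀ f ∈ H.edgeSet, e ≠ f → Disjoint (Pe e) (Pe f)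
  disj_bb : ∀ (v : V), ∀ e ∈ H.edgeSet, v ∈ e → ∀ (w : V), ∀ f ∈ H.edgeSet, w ∈ f →
    (v, e) ≠ (w, f) → Disjoint (Pve v e) (Pve w f)
  disj_aa : ∀ e ∈ H.edgeSet, ∀ f ∈ H.edgeSet, e ≠ f → Disjoint (Ae e) (Ae f)
  disj_v_e : ∀ (v : V), ∀ e ∈ H.edgeSet, Disjoint (Pv v) (Pe e)
  disj_v_b : ∀ (v w : V), ∀ f ∈ H.edgeSet, w ∈ f → Disjoint (Pv v) (Pve w f)
  disj_v_a : ∀ (v : V), ∀ e ∈ H.edgeSet, Disjoint (Pv v) (Ae e)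
  disj_e_b : ∀ e ∈ H.edgeSet, ∀ (w : V), ∀ f ∈ H.edgeSet, w ∈ f →
    Disjoint (Pe e) (Pve w f)
  disj_e_a : ∀ e ∈ H.edgeSet, ∀ f ∈ H.edgeSet, Disjoint (Pe e) (Ae f)
  disj_b_a : ∀ (v : V), ∀ e ∈ H.edgeSet, v ∈ e → ∀ f ∈ H.edgeSet,
    Disjoint (Pve v e) (Ae f)
  cover : ∀ x : N, (∃ v : V, x ∈ Pv v) ∨ (∃ e ∈ H.edgeSet, x ∈ Pe e) ∨
    (∃ (v : V), ∃ e ∈ H.edgeSet, v ∈ e ∧ x ∈ Pve v e) ∨ (∃ e ∈ H.edgeSet, x ∈ Ae e)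
  adj_bv : ∀ (v : V), ∀ e ∈ H.edgeSet, v ∈ e → G.Adj (bp v e) (vp v)
  adj_be : ∀ (v : V), ∀ e ∈ H.edgeSet, v ∈ e → G.Adj (bp v e) (ep e)
  adj_ae : ∀ e ∈ H.edgeSet, ∀ a ∈ Ae e, G.Adj a (ep e)
  adj_ab : ∀ (v : V), ∀ e ∈ H.edgeSet, v ∈ e → ∀ a ∈ Ae e, G.Adj a (bp v e)
  adj_cases : ∀ x y : N, G.Adj x y →
    (∃ v : V, x ∈ Pv v ∧ y ∈ Pv v) ∨
    (∃ e ∈ H.edgeSet, x ∈ Pe e ∧ y ∈ Pe e) ∨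
    (∃ (v : V), ∃ e ∈ H.edgeSet, v ∈ e ∧ x ∈ Pve v e ∧ y ∈ Pve v e) ∨
    (∃ e ∈ H.edgeSet, x ∈ Ae e ∧ y ∈ Ae e) ∨
    (∃ (v : V), ∃ e ∈ H.edgeSet, v ∈ e ∧
      ((x = bp v e ∧ y = vp v) ∨ (y = bp v e ∧ x = vp v))) ∨
    (∃ (v : V), ∃ e ∈ H.edgeSet, v ∈ e ∧
      ((x = bp v e ∧ y = ep e) ∨ (y = bp v e ∧ x = ep e))) ∨
    (∃ e ∈ H.edgeSet, (x ∈ Ae e ∧ y = ep e) ∨ (y ∈ Ae e ∧ x = ep e)) ∨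
    (∃ (v : V), ∃ e ∈ H.edgeSet, v ∈ e ∧
      ((x ∈ Ae e ∧ y = bp v e) ∨ (y ∈ Ae e ∧ x = bp v e)))

/-- `Γ` is the coalition structure of the min-based reduction instance: its coalitions
are exactly the gadget player sets and the dummy sets. -/
def IsMinGamma (H : SimpleGraph V) (Pv : V → Finset N) (Pe : Sym2 V → Finset N)
    (Pve : V → Sym2 V → Finset N) (Ae : Sym2 V → Finset N)
    (Γ : CoalitionStructure N) : Prop :=
  (∀ v : V, ∀ i ∈ Pv v, Γ.part i = Pv v) ∧
  (∀ e ∈ H.edgeSet, ∀ i ∈ Pe e, Γ.part i = Pe e) ∧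
  (∀ (v : V), ∀ e ∈ H.edgeSet, v ∈ e → ∀ i ∈ Pve v e, Γ.part i = Pve v e) ∧
  (∀ e ∈ H.edgeSet, ∀ i ∈ Ae e, Γ.part i = Ae e)
end AHGDefs


section MyAux
open Finset

lemma mod_key (k' : ℕ) (a b : Fin k') :
    (b.val + k' - a.val) % k' = if a.val ≤ b.val then b.val - a.val else b.val + k' - a.val := by
  have ha := a.isLt; have hb := b.isLt
  split
  · next hle =>
    have h1 : b.val + k' - a.val = k' + (b.val - a.val) := by omega
    rw [h1, Nat.add_mod_left, Nat.mod_eq_of_lt (by omega)]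
  · next h => exact Nat.mod_eq_of_lt (by omega)

lemma count_cycDist (k' d : ℕ) (h : 2 * d + 1 ≤ k') (a : Fin k') :
    (Finset.univ.filter fun b : Fin k' => b ≠ a ∧ cycDist k' a b ≤ d).card = 2 * d := by
  have hT : ((Finset.Icc 1 d) ∪ (Finset.Icc (k' - d) (k' - 1))).card = 2 * d := by
    rw [Finset.card_union_of_disjoint, Nat.card_Icc, Nat.card_Icc]
    · omega
    · rw [Finset.disjoint_left]
      intro x hx hx'
      simp only [Finset.mem_Icc] at hx hx'
      omega
  rw [← hT]
  apply Finset.card_nbij (fun b => (b.val + k' - a.val) % k')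
  · intro b hb
    simp only [Finset.mem_coe, Finset.mem_filter, Finset.mem_univ, true_and] at hb
    obtain ⟨hne, hcd⟩ := hb
    have hval : b.val ≠ a.val := fun h => hne (Fin.ext h)
    have ha := a.isLt; have hbl := b.isLt
    unfold cycDist at hcd
    rw [mod_key k' a b, mod_key k' b a] at hcd
    simp only [Finset.mem_coe, Finset.mem_union, Finset.mem_Icc]
    rw [mod_key k' a b]
    split at hcd <;> split at hcd <;> simp only [min_le_iff] at hcd <;> split <;> omega
  · intro b1 h1 b2 h2 heq
    simp only [Finset.coe_filter, Set.mem_setOf_eq] at h1 h2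
    have ha := a.isLt; have h1l := b1.isLt; have h2l := b2.isLt
    simp only at heq
    rw [mod_key k' a b1, mod_key k' a b2] at heq
    apply Fin.ext
    split at heq <;> split at heq <;> omega
  · intro m hm
    simp only [Finset.coe_union, Set.mem_union, Finset.coe_Icc, Set.mem_Icc] at hm
    have ha := a.isLt
    have hk0 : 0 < k' := by omega
    refine ⟨⟨(a.val + m) % k', Nat.mod_lt _ hk0⟩, ?_, ?_⟩
    · have hbv : ((a.val + m) % k' : ℕ) =
          if a.val + m < k' then a.val + m else a.val + m - k' := by
        split
        · exact Nat.mod_eq_of_lt (by omega)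
        · next hge =>
          rw [Nat.mod_eq_sub_mod (by omega), Nat.mod_eq_of_lt (by omega)]
      simp only [Set.mem_setOf_eq, Finset.coe_filter, Finset.mem_univ, true_and,
        Finset.mem_coe, Finset.mem_filter]
      constructor
      · intro hEq
        have : ((a.val + m) % k' : ℕ) = a.val := congrArg Fin.val hEq
        rw [hbv] at this; split at this <;> omega
      · unfold cycDist
        rw [mod_key k' a _, mod_key k' _ a]
        simp only [hbv]
        split <;> split <;> split <;> omega
    · show ((((a.val + m) % k') + k' - a.val) % k') = m
      have hbv : ((a.val + m) % k' : ℕ) =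
          if a.val + m < k' then a.val + m else a.val + m - k' := by
        split
        · exact Nat.mod_eq_of_lt (by omega)
        · next hge =>
          rw [Nat.mod_eq_sub_mod (by omega), Nat.mod_eq_of_lt (by omega)]
      rw [hbv]
      split
      · next hlt =>
        have : a.val + m + k' - a.val = k' + m := by omega
        rw [this, Nat.add_mod_left, Nat.mod_eq_of_lt (by omega)]
      · next hge =>
        have : a.val + m - k' + k' - a.val = m := by omega
        rw [this, Nat.mod_eq_of_lt (by omega)]

variable {N : Type*} [Fintype N] [DecidableEq N]

lemma friendsIn_subset (G : SimpleGraph N) (C : Finset N) (i : N) :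
    friendsIn G C i ⊆ C := Finset.filter_subset _ _

lemma not_mem_friendsIn (G : SimpleGraph N) (C : Finset N) (i : N) :
    i ∉ friendsIn G C i := by
  simp [friendsIn]

lemma fval_formula (G : SimpleGraph N) (C : Finset N) (i : N) (hi : i ∈ C) :
    fval G C i = (Fintype.card N : ℤ) * ((friendsIn G C i).card : ℤ) -
      ((C.card : ℤ) - 1 - ((friendsIn G C i).card : ℤ)) := by
  have hsub : insert i (friendsIn G C i) ⊆ C :=
    Finset.insert_subset hi (friendsIn_subset G C i)
  have hset : C.filter (fun j => ¬ G.Adj i j ∧ j ≠ i) = C \ insert i (friendsIn G C i) := by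
    ext j
    simp only [Finset.mem_filter, Finset.mem_sdiff, Finset.mem_insert, friendsIn]
    constructor
    · rintro ⟨hj, hna, hne⟩; exact ⟨hj, by push_neg; exact ⟨hne, fun _ => hna⟩⟩
    · rintro ⟨hj, hn⟩; push_neg at hn; exact ⟨hj, hn.2 hj, hn.1⟩
  have hcard : (C.filter (fun j => ¬ G.Adj i j ∧ j ≠ i)).card =
      C.card - ((friendsIn G C i).card + 1) := by
    rw [hset, Finset.card_sdiff_of_subset hsub, Finset.card_insert_of_notMem (not_mem_friendsIn G C i)]
  have hle : (friendsIn G C i).card + 1 ≤ C.card := by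
    rw [← Finset.card_insert_of_notMem (not_mem_friendsIn G C i)]
    exact Finset.card_le_card hsub
  unfold fval
  rw [hcard]
  push_cast [Nat.cast_sub (by omega : (friendsIn G C i).card + 1 ≤ C.card)]
  ring

lemma utilMinEQ_const (G : SimpleGraph N) (C : Finset N) (M : ℤ)
    (h : ∀ c ∈ C, fval G C c = M) (i : N) (hi : i ∈ C) : utilMinEQ G C i = M := by
  unfold utilMinEQ
  apply le_antisymm
  · exact le_of_le_of_eq (Finset.inf'_le _ (Finset.mem_insert_self _ _)) (h i hi)
  · apply Finset.le_inf'
    intro c hc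
    rcases Finset.mem_insert.1 hc with rfl | hc
    · exact (h c hi).ge
    · exact (h c (friendsIn_subset G C i hc)).ge

lemma utilMinAL_const (G : SimpleGraph N) (w : ℤ) (C : Finset N) (M : ℤ)
    (h : ∀ c ∈ C, fval G C c = M) (i : N) (hi : i ∈ C)
    (hne : (friendsIn G C i).Nonempty) : utilMinAL G w C i = M + w * M := by
  unfold utilMinAL
  rw [dif_pos hne, h i hi]
  congr 1
  congr 1
  apply le_antisymm
  · obtain ⟨c, hc⟩ := hne
    exact le_of_le_of_eq (Finset.inf'_le _ hc) (h c (friendsIn_subset G C i hc))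
  · exact Finset.le_inf' _ _ fun c hc => (h c (friendsIn_subset G C i hc)).ge

lemma circulant_facts (G : SimpleGraph N) (r k' : ℕ) (hr : 2 * (r / 2) = r)
    (hrk : r + 1 ≤ k') (P : Finset N) (h : IsCirculantGadget G r k' P)
    (i : N) (hi : i ∈ P) :
    P.card = k' ∧ (friendsIn G P i).card = r ∧
      fval G P i = (Fintype.card N : ℤ) * r - ((k' : ℤ) - 1 - r) := by
  obtain ⟨f, hinj, himg, hadj⟩ := h
  have hPcard : P.card = k' := by
    rw [← himg, Finset.card_image_of_injective _ hinj, Finset.card_univ, Fintype.card_fin]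
  obtain ⟨a, -, rfl⟩ : ∃ a ∈ Finset.univ, f a = i := by
    rw [← Finset.mem_image, himg]; exact hi
  have hfr : friendsIn G P (f a) = Finset.image f
      (Finset.univ.filter fun b => b ≠ a ∧ cycDist k' a b ≤ r / 2) := by
    unfold friendsIn
    rw [← himg, Finset.filter_image]
    congr 1
    ext b
    simp only [Finset.mem_filter, Finset.mem_univ, true_and]
    rw [hadj a b]
    tauto
  have hcard : (friendsIn G P (f a)).card = r := by
    rw [hfr, Finset.card_image_of_injective _ hinj, count_cycDist k' (r/2) (by omega) a]
    omega
  refine ⟨hPcard, hcard, ?_⟩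
  rw [fval_formula G P (f a) (by rw [← himg]; exact Finset.mem_image_of_mem f (Finset.mem_univ a)),
    hcard, hPcard]

end MyAux


/-- In the min-based reduction instance, given a clique `K` of size `k` in `H`, the
coalition `C` consisting of the vertex players of `K`, the edge players of all edges
inside `K`, the corresponding incidence players, and the corresponding dummy players,
has `|C| = k + k·(k choose 2)`, gives every member min-EQ utility
`(k−1)·n − (|C| − k)`, and blocks `Γ` under min-EQ utilities as well as under min-AL
utilities with any weight `w ≥ n^4`. -/

theorem min_clique_coalition_blocks {V N : Type*}
    [Fintype V] [DecidableEq V] [Fintype N] [DecidableEq N]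
    (H : SimpleGraph V) (k : ℕ) (hk : 3 ≤ k) (hodd : Odd k)
    (G : SimpleGraph N) (Pv : V → Finset N) (Pe : Sym2 V → Finset N)
    (Pve : V → Sym2 V → Finset N) (Ae : Sym2 V → Finset N)
    (vp : V → N) (ep : Sym2 V → N) (bp : V → Sym2 V → N)
    (R : MinReduction H k G Pv Pe Pve Ae vp ep bp)
    (w : ℤ) (hw : (Fintype.card N : ℤ) ^ 4 ≤ w)
    (Γ : CoalitionStructure N) (hΓ : IsMinGamma H Pv Pe Pve Ae Γ)
    (K : Finset V) (hK : H.IsNClique k K) :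
    ∀ EK : Finset (Sym2 V), EK = H.edgeFinset.filter (fun e => ∀ v ∈ e, v ∈ K) →
    ∀ C : Finset N,
      C = K.image vp ∪ EK.image ep ∪
          EK.biUnion (fun e =>
            (Finset.univ.filter (fun v : V => v ∈ e)).image (fun v => bp v e) ∪ Ae e) →
      C.card = k + k * Nat.choose k 2 ∧
      (∀ i ∈ C, utilMinEQ G C i =
        ((k : ℤ) - 1) * (Fintype.card N : ℤ) - ((C.card : ℤ) - (k : ℤ))) ∧
      Blocks (utilMinEQ G) Γ C ∧ Blocks (utilMinAL G w) Γ C := by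
  intro EK hEK C hC
  obtain ⟨mhalf, hmhalf⟩ := hodd
  have hE : ∀ e ∈ EK, e ∈ H.edgeSet := by
    intro e he; rw [hEK] at he
    exact SimpleGraph.mem_edgeFinset.mp (Finset.mem_filter.1 he).1
  have hEK_K : ∀ e ∈ EK, ∀ v ∈ e, v ∈ K := by
    intro e he; rw [hEK] at he; exact (Finset.mem_filter.1 he).2
  have hmemEK : ∀ x y : V, x ∈ K → y ∈ K → x ≠ y → s(x, y) ∈ EK := by
    intro x y hx hy hxy
    rw [hEK, Finset.mem_filter]
    refine ⟨SimpleGraph.mem_edgeFinset.mpr (H.mem_edgeSet.2 (hK.1 hx hy hxy)), ?_⟩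
    intro v hv; rcases Sym2.mem_iff.1 hv with rfl | rfl <;> assumption
  have hKcard : K.card = k := hK.2
  have sym2cases : ∀ e : Sym2 V, e ∈ H.edgeSet → ∃ x y : V, x ≠ y ∧ e = s(x, y) := by
    intro e
    induction e using Sym2.ind with
    | _ x y => exact fun he => ⟨x, y, (H.mem_edgeSet.1 he).ne, rfl⟩
  have hPvPv : ∀ (x : N) (u v : V), x ∈ Pv u → x ∈ Pv v → u = v := by
    intro x u v h1 h2; by_contra hne
    exact Finset.disjoint_left.1 (R.disj_vv u v hne) h1 h2
  have hPePe : ∀ e ∈ H.edgeSet, ∀ f ∈ H.edgeSet, ∀ x : N, x ∈ Pe e → x ∈ Pe f → e = f := by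
    intro e he f hf x h1 h2; by_contra hne
    exact Finset.disjoint_left.1 (R.disj_ee e he f hf hne) h1 h2
  have hPvePve : ∀ (u : V), ∀ f ∈ H.edgeSet, u ∈ f → ∀ (u' : V), ∀ f' ∈ H.edgeSet, u' ∈ f' →
      ∀ x : N, x ∈ Pve u f → x ∈ Pve u' f' → u = u' ∧ f = f' := by
    intro u f hf hu u' f' hf' hu' x h1 h2
    by_contra hne
    refine Finset.disjoint_left.1 (R.disj_bb u f hf hu u' f' hf' hu' ?_) h1 h2
    intro hcon; rw [Prod.mk.injEq] at hcon; exact hne hcon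
  have hAeAe : ∀ g ∈ H.edgeSet, ∀ g' ∈ H.edgeSet, ∀ x : N, x ∈ Ae g → x ∈ Ae g' → g = g' := by
    intro g hg g' hg' x h1 h2; by_contra hne
    exact Finset.disjoint_left.1 (R.disj_aa g hg g' hg' hne) h1 h2
  have hvPe : ∀ (v : V), ∀ f ∈ H.edgeSet, vp v ∉ Pe f := fun v f hf =>
    Finset.disjoint_left.1 (R.disj_v_e v f hf) (R.vp_mem v)
  have hvPve : ∀ (v u : V), ∀ f ∈ H.edgeSet, u ∈ f → vp v ∉ Pve u f := fun v u f hf hu =>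
    Finset.disjoint_left.1 (R.disj_v_b v u f hf hu) (R.vp_mem v)
  have hvAe : ∀ (v : V), ∀ f ∈ H.edgeSet, vp v ∉ Ae f := fun v f hf =>
    Finset.disjoint_left.1 (R.disj_v_a v f hf) (R.vp_mem v)
  have hePv : ∀ e ∈ H.edgeSet, ∀ v : V, ep e ∉ Pv v := fun e he v h =>
    Finset.disjoint_left.1 (R.disj_v_e v e he) h (R.ep_mem e he)
  have hePve : ∀ e ∈ H.edgeSet, ∀ (u : V), ∀ f ∈ H.edgeSet, u ∈ f → ep e ∉ Pve u f :=
    fun e he u f hf hu => Finset.disjoint_left.1 (R.disj_e_b e he u f hf hu) (R.ep_mem e he)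
  have heAe : ∀ e ∈ H.edgeSet, ∀ f ∈ H.edgeSet, ep e ∉ Ae f := fun e he f hf =>
    Finset.disjoint_left.1 (R.disj_e_a e he f hf) (R.ep_mem e he)
  have hbPv : ∀ (u : V), ∀ f ∈ H.edgeSet, u ∈ f → ∀ v : V, bp u f ∉ Pv v :=
    fun u f hf hu v h => Finset.disjoint_left.1 (R.disj_v_b v u f hf hu) h (R.bp_mem u f hf hu)
  have hbPe : ∀ (u : V), ∀ f ∈ H.edgeSet, u ∈ f → ∀ e ∈ H.edgeSet, bp u f ∉ Pe e :=
    fun u f hf hu e he h =>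
      Finset.disjoint_left.1 (R.disj_e_b e he u f hf hu) h (R.bp_mem u f hf hu)
  have hbAe : ∀ (u : V), ∀ f ∈ H.edgeSet, u ∈ f → ∀ g ∈ H.edgeSet, bp u f ∉ Ae g :=
    fun u f hf hu g hg =>
      Finset.disjoint_left.1 (R.disj_b_a u f hf hu g hg) (R.bp_mem u f hf hu)
  have haPv : ∀ g ∈ H.edgeSet, ∀ x ∈ Ae g, ∀ v : V, x ∉ Pv v :=
    fun g hg x hx v h => Finset.disjoint_left.1 (R.disj_v_a v g hg) h hx
  have haPe : ∀ g ∈ H.edgeSet, ∀ x ∈ Ae g, ∀ e ∈ H.edgeSet, x ∉ Pe e :=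
    fun g hg x hx e he h => Finset.disjoint_left.1 (R.disj_e_a e he g hg) h hx
  have haPve : ∀ g ∈ H.edgeSet, ∀ x ∈ Ae g, ∀ (u : V), ∀ f ∈ H.edgeSet, u ∈ f →
      x ∉ Pve u f :=
    fun g hg x hx u f hf hu h => Finset.disjoint_left.1 (R.disj_b_a u f hf hu g hg) h hx
  have memC : ∀ j : N, j ∈ C ↔ (∃ v ∈ K, vp v = j) ∨ (∃ e ∈ EK, ep e = j) ∨
      (∃ e ∈ EK, ∃ v, v ∈ e ∧ bp v e = j) ∨ (∃ e ∈ EK, j ∈ Ae e) := by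
    intro j
    simp only [hC, Finset.mem_union, Finset.mem_image, Finset.mem_biUnion, Finset.mem_filter,
      Finset.mem_univ, true_and]
    constructor
    · rintro ((⟨v, hv, h⟩ | ⟨e, he, h⟩) | ⟨e, he, (⟨v, hv, h⟩ | h)⟩)
      · exact Or.inl ⟨v, hv, h⟩
      · exact Or.inr (Or.inl ⟨e, he, h⟩)
      · exact Or.inr (Or.inr (Or.inl ⟨e, he, v, hv, h⟩))
      · exact Or.inr (Or.inr (Or.inr ⟨e, he, h⟩))
    · rintro (⟨v, hv, h⟩ | ⟨e, he, h⟩ | ⟨e, he, v, hv, h⟩ | ⟨e, he, h⟩)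
      · exact Or.inl (Or.inl ⟨v, hv, h⟩)
      · exact Or.inl (Or.inr ⟨e, he, h⟩)
      · exact Or.inr ⟨e, he, Or.inl ⟨v, hv, h⟩⟩
      · exact Or.inr ⟨e, he, Or.inr h⟩
  have vpC : ∀ v ∈ K, vp v ∈ C := fun v hv => (memC _).2 (Or.inl ⟨v, hv, rfl⟩)
  have epC : ∀ e ∈ EK, ep e ∈ C := fun e he => (memC _).2 (Or.inr (Or.inl ⟨e, he, rfl⟩))
  have bpC : ∀ e ∈ EK, ∀ v, v ∈ e → bp v e ∈ C := fun e he v hv =>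
    (memC _).2 (Or.inr (Or.inr (Or.inl ⟨e, he, v, hv, rfl⟩)))
  have aeC : ∀ e ∈ EK, ∀ x ∈ Ae e, x ∈ C := fun e he x hx =>
    (memC _).2 (Or.inr (Or.inr (Or.inr ⟨e, he, hx⟩)))
  have classPv : ∀ j ∈ C, ∀ v : V, j ∈ Pv v → v ∈ K ∧ j = vp v := by
    intro j hj v hjv
    rcases (memC j).1 hj with ⟨u, hu, rfl⟩ | ⟨e, he, rfl⟩ | ⟨e, he, u, hue, rfl⟩ | ⟨e, he, hjA⟩
    · have h := hPvPv _ u v (R.vp_mem u) hjv; subst h; exact ⟨hu, rfl⟩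
    · exact absurd hjv (hePv e (hE e he) v)
    · exact absurd hjv (hbPv u e (hE e he) hue v)
    · exact absurd hjv (haPv e (hE e he) _ hjA v)
  have classPe : ∀ j ∈ C, ∀ e ∈ H.edgeSet, j ∈ Pe e → e ∈ EK ∧ j = ep e := by
    intro j hj e he hje
    rcases (memC j).1 hj with ⟨u, hu, rfl⟩ | ⟨f, hf, rfl⟩ | ⟨f, hf, u, huf, rfl⟩ | ⟨f, hf, hjA⟩
    · exact absurd hje (hvPe u e he)
    · have h := hPePe f (hE f hf) e he _ (R.ep_mem f (hE f hf)) hje; subst h; exact ⟨hf, rfl⟩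
    · exact absurd hje (hbPe u f (hE f hf) huf e he)
    · exact absurd hje (haPe f (hE f hf) _ hjA e he)
  have classPve : ∀ j ∈ C, ∀ (u : V), ∀ f ∈ H.edgeSet, u ∈ f → j ∈ Pve u f →
      f ∈ EK ∧ j = bp u f := by
    intro j hj u f hf hu hjf
    rcases (memC j).1 hj with ⟨x, hx, rfl⟩ | ⟨e, he, rfl⟩ | ⟨e, he, x, hxe, rfl⟩ | ⟨e, he, hjA⟩
    · exact absurd hjf (hvPve x u f hf hu)
    · exact absurd hjf (hePve e (hE e he) u f hf hu)
    · obtain ⟨h1, h2⟩ := hPvePve x e (hE e he) hxe u f hf hu _ (R.bp_mem x e (hE e he) hxe) hjf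
      subst h1; subst h2; exact ⟨he, rfl⟩
    · exact absurd hjf (haPve e (hE e he) _ hjA u f hf hu)
  have classAe : ∀ j ∈ C, ∀ f ∈ H.edgeSet, j ∈ Ae f → f ∈ EK := by
    intro j hj f hf hjf
    rcases (memC j).1 hj with ⟨x, hx, rfl⟩ | ⟨e, he, rfl⟩ | ⟨e, he, x, hxe, rfl⟩ | ⟨e, he, hjA⟩
    · exact absurd hjf (hvAe x f hf)
    · exact absurd hjf (heAe e (hE e he) f hf)
    · exact absurd hjf (hbAe x e (hE e he) hxe f hf)
    · have h := hAeAe e (hE e he) f hf _ hjA hjf; subst h; exact he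
  -- cardinalities
  have hinc : ∀ v ∈ K, (EK.filter fun e => v ∈ e) = (K.erase v).image (fun u => s(v, u)) := by
    intro v hv; ext e
    simp only [Finset.mem_filter, Finset.mem_image, Finset.mem_erase]
    constructor
    · rintro ⟨heEK, hve⟩
      obtain ⟨x, y, hxy, rfl⟩ := sym2cases e (hE e heEK)
      rcases Sym2.mem_iff.1 hve with rfl | rfl
      · exact ⟨y, ⟨Ne.symm hxy, hEK_K _ heEK y (Sym2.mem_mk_right _ _)⟩, rfl⟩
      · exact ⟨x, ⟨hxy, hEK_K _ heEK x (Sym2.mem_mk_left _ _)⟩, Sym2.eq_swap⟩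
    · rintro ⟨u, ⟨hune, huK⟩, rfl⟩
      exact ⟨hmemEK v u hv huK (Ne.symm hune), Sym2.mem_mk_left _ _⟩
  have hinc_card : ∀ v ∈ K, (EK.filter fun e => v ∈ e).card = k - 1 := by
    intro v hv
    rw [hinc v hv, Finset.card_image_of_injective _ (fun a b h => Sym2.congr_right.1 h),
      Finset.card_erase_of_mem hv, hKcard]
  have hEKimg : EK = K.offDiag.image (fun p => s(p.1, p.2)) := by
    ext e
    simp only [Finset.mem_image, Finset.mem_offDiag]
    constructor
    · intro he
      obtain ⟨x, y, hxy, rfl⟩ := sym2cases e (hE e he)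
      exact ⟨(x, y), ⟨hEK_K _ he x (Sym2.mem_mk_left _ _), hEK_K _ he y (Sym2.mem_mk_right _ _),
        hxy⟩, rfl⟩
    · rintro ⟨⟨x, y⟩, ⟨hx, hy, hne⟩, rfl⟩
      exact hmemEK x y hx hy hne
  have hEK2 : EK.card * 2 = k * (k - 1) := by
    have h1 : K.offDiag.card = ∑ e ∈ K.offDiag.image (fun p => s(p.1, p.2)),
        (K.offDiag.filter fun p => s(p.1, p.2) = e).card :=
      Finset.card_eq_sum_card_image _ _
    rw [← hEKimg] at h1
    have h2 : ∀ e ∈ EK, (K.offDiag.filter fun p => s(p.1, p.2) = e).card = 2 := by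
      intro e he
      obtain ⟨x, y, hxy, rfl⟩ := sym2cases e (hE e he)
      have hset : (K.offDiag.filter fun p => s(p.1, p.2) = s(x, y)) = {(x, y), (y, x)} := by
        ext ⟨a, b⟩
        simp only [Finset.mem_filter, Finset.mem_offDiag, Finset.mem_insert,
          Finset.mem_singleton, Prod.mk.injEq, Sym2.eq_iff]
        constructor
        · rintro ⟨-, (⟨rfl, rfl⟩ | ⟨rfl, rfl⟩)⟩
          · exact Or.inl ⟨rfl, rfl⟩
          · exact Or.inr ⟨rfl, rfl⟩
        · have hxK := hEK_K _ he x (Sym2.mem_mk_left _ _)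
          have hyK := hEK_K _ he y (Sym2.mem_mk_right _ _)
          rintro (⟨rfl, rfl⟩ | ⟨rfl, rfl⟩)
          · exact ⟨⟨hxK, hyK, hxy⟩, Or.inl ⟨rfl, rfl⟩⟩
          · exact ⟨⟨hyK, hxK, Ne.symm hxy⟩, Or.inr ⟨rfl, rfl⟩⟩
      rw [hset, Finset.card_insert_of_notMem, Finset.card_singleton]
      simp only [Finset.mem_singleton, Prod.mk.injEq]
      exact fun h => hxy h.1
    rw [Finset.sum_congr rfl h2, Finset.sum_const, smul_eq_mul] at h1
    rw [Finset.offDiag_card, hKcard] at h1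
    obtain ⟨m, rfl⟩ : ∃ m, k = m + 1 := ⟨k - 1, by omega⟩
    have h3 : (m + 1) * (m + 1) - (m + 1) = (m + 1) * m := by
      rw [Nat.mul_succ, Nat.add_sub_cancel]
    rw [h3] at h1
    simpa using h1.symm
  have hEKcard : EK.card = Nat.choose k 2 := by
    rw [Nat.choose_two_right]
    generalize hq : k * (k - 1) = q at hEK2 ⊢
    omega
  have hBcard : ∀ e ∈ EK,
      ((Finset.univ.filter fun v : V => v ∈ e).image (fun v => bp v e) ∪ Ae e).card = k - 1 := by
    intro e he
    obtain ⟨x, y, hne, hexy⟩ := sym2cases e (hE e he)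
    have hxe : x ∈ e := by rw [hexy]; exact Sym2.mem_mk_left _ _
    have hye : y ∈ e := by rw [hexy]; exact Sym2.mem_mk_right _ _
    have hpair : (Finset.univ.filter fun v : V => v ∈ e) = {x, y} := by
      ext v; rw [hexy]; simp [Sym2.mem_iff]
    have hbxy : bp x e ≠ bp y e := by
      intro hcon
      exact hne (hPvePve x e (hE e he) hxe y e (hE e he) hye _ (R.bp_mem x e (hE e he) hxe)
        (by rw [hcon]; exact R.bp_mem y e (hE e he) hye)).1
    have hBeq : (Finset.univ.filter fun v : V => v ∈ e).image (fun v => bp v e) ∪ Ae e =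
        insert (bp x e) (insert (bp y e) (Ae e)) := by
      rw [hpair, Finset.image_insert, Finset.image_singleton]
      ext j
      simp only [Finset.mem_union, Finset.mem_insert, Finset.mem_singleton]
      tauto
    rw [hBeq, Finset.card_insert_of_notMem, Finset.card_insert_of_notMem,
      R.Ae_card e (hE e he)]
    · omega
    · exact hbAe y e (hE e he) hye e (hE e he)
    · simp only [Finset.mem_insert]
      push_neg
      exact ⟨hbxy, hbAe x e (hE e he) hxe e (hE e he)⟩
  have hBdisj : ∀ e ∈ EK, ∀ f ∈ EK, e ≠ f →
      Disjoint ((Finset.univ.filter fun v : V => v ∈ e).image (fun v => bp v e) ∪ Ae e)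
        ((Finset.univ.filter fun v : V => v ∈ f).image (fun v => bp v f) ∪ Ae f) := by
    intro e he f hf hef
    rw [Finset.disjoint_left]
    intro j hj hj'
    simp only [Finset.mem_union, Finset.mem_image, Finset.mem_filter, Finset.mem_univ,
      true_and] at hj hj'
    rcases hj with ⟨u, hu, rfl⟩ | hj <;> rcases hj' with ⟨u', hu', hbb⟩ | hj'
    · have h2 : bp u' f ∈ Pve u e := by rw [hbb]; exact R.bp_mem u e (hE e he) hu
      exact hef (hPvePve u' f (hE f hf) hu' u e (hE e he) hu _
        (R.bp_mem u' f (hE f hf) hu') h2).2.symm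
    · exact hbAe u e (hE e he) hu f (hE f hf) hj'
    · exact hbAe u' f (hE f hf) hu' e (hE e he) (by rw [hbb]; exact hj)
    · exact hef (hAeAe e (hE e he) f (hE f hf) j hj hj')
  have vp_injOn : Set.InjOn vp ↑K := fun a _ b _ h =>
    hPvPv (vp a) a b (R.vp_mem a) (by rw [h]; exact R.vp_mem b)
  have ep_injOn : Set.InjOn ep ↑EK := fun a ha b hb h =>
    hPePe a (hE a (Finset.mem_coe.1 ha)) b (hE b (Finset.mem_coe.1 hb)) (ep a)
      (R.ep_mem a (hE a (Finset.mem_coe.1 ha)))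
      (by rw [h]; exact R.ep_mem b (hE b (Finset.mem_coe.1 hb)))
  have hCcard : C.card = k + k * Nat.choose k 2 := by
    have hbi : (EK.biUnion fun e =>
        (Finset.univ.filter fun v : V => v ∈ e).image (fun v => bp v e) ∪ Ae e).card =
        EK.card * (k - 1) := by
      rw [Finset.card_biUnion hBdisj, Finset.sum_congr rfl hBcard, Finset.sum_const, smul_eq_mul]
    have d1 : Disjoint (K.image vp) (EK.image ep) := by
      rw [Finset.disjoint_left]
      rintro j hj hj'
      obtain ⟨v, hv, rfl⟩ := Finset.mem_image.1 hj
      obtain ⟨e, he, hepj⟩ := Finset.mem_image.1 hj'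
      exact hvPe v e (hE e he) (by rw [← hepj]; exact R.ep_mem e (hE e he))
    have d2 : Disjoint (K.image vp ∪ EK.image ep)
        (EK.biUnion fun e =>
          (Finset.univ.filter fun v : V => v ∈ e).image (fun v => bp v e) ∪ Ae e) := by
      rw [Finset.disjoint_left]
      intro j hj hj'
      obtain ⟨f, hf, hjf⟩ := Finset.mem_biUnion.1 hj'
      simp only [Finset.mem_union, Finset.mem_image, Finset.mem_filter, Finset.mem_univ,
        true_and] at hjf
      rcases Finset.mem_union.1 hj with hj1 | hj1
      · obtain ⟨v, hv, rfl⟩ := Finset.mem_image.1 hj1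
        rcases hjf with ⟨u, hu, hbb⟩ | hja
        · exact hvPve v u f (hE f hf) hu (by rw [← hbb]; exact R.bp_mem u f (hE f hf) hu)
        · exact hvAe v f (hE f hf) hja
      · obtain ⟨e, he, rfl⟩ := Finset.mem_image.1 hj1
        rcases hjf with ⟨u, hu, hbb⟩ | hja
        · exact hePve e (hE e he) u f (hE f hf) hu
            (by rw [← hbb]; exact R.bp_mem u f (hE f hf) hu)
        · exact heAe e (hE e he) f (hE f hf) hja
    have hstep : C.card = k + EK.card + EK.card * (k - 1) := by
      rw [hC, Finset.card_union_of_disjoint d2, Finset.card_union_of_disjoint d1,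
        Finset.card_image_of_injOn vp_injOn, Finset.card_image_of_injOn ep_injOn, hKcard, hbi]
    have h3 : Nat.choose k 2 + Nat.choose k 2 * (k - 1) = Nat.choose k 2 * k := by
      calc Nat.choose k 2 + Nat.choose k 2 * (k - 1)
          = Nat.choose k 2 * (1 + (k - 1)) := by rw [Nat.mul_add, Nat.mul_one]
        _ = Nat.choose k 2 * k := by congr 1; omega
    rw [hstep, hEKcard, Nat.mul_comm k (Nat.choose k 2), Nat.add_assoc, h3]
  -- friend sets inside C
  have hfv_vp : ∀ v ∈ K,
      friendsIn G C (vp v) = (EK.filter fun e => v ∈ e).image fun e => bp v e := by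
    intro v hv
    ext j
    simp only [friendsIn, Finset.mem_filter, Finset.mem_image]
    constructor
    · rintro ⟨hjC, hadj⟩
      rcases R.adj_cases _ _ hadj with ⟨u, h1, h2⟩ | ⟨f, hf, h1, h2⟩ | ⟨u, f, hf, huf, h1, h2⟩ |
        ⟨f, hf, h1, h2⟩ | ⟨u, f, hf, huf, hc⟩ | ⟨u, f, hf, huf, hc⟩ | ⟨f, hf, hc⟩ |
        ⟨u, f, hf, huf, hc⟩
      · have hu : u = v := hPvPv _ u v h1 (R.vp_mem v)
        subst hu
        obtain ⟨-, hj⟩ := classPv j hjC u h2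
        exact absurd hj.symm hadj.ne
      · exact absurd h1 (hvPe v f hf)
      · exact absurd h1 (hvPve v u f hf huf)
      · exact absurd h1 (hvAe v f hf)
      · rcases hc with ⟨h1, h2⟩ | ⟨h1, h2⟩
        · exact absurd (show vp v ∈ Pve u f by rw [h1]; exact R.bp_mem u f hf huf)
            (hvPve v u f hf huf)
        · have hvu : v = u := hPvPv (vp v) v u (R.vp_mem v) (by rw [h2]; exact R.vp_mem u)
          subst hvu
          obtain ⟨hfEK, -⟩ := classPve j hjC v f hf huf (by rw [h1]; exact R.bp_mem v f hf huf)
          exact ⟨f, ⟨hfEK, huf⟩, h1.symm⟩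
      · rcases hc with ⟨h1, h2⟩ | ⟨h1, h2⟩
        · exact absurd (show vp v ∈ Pve u f by rw [h1]; exact R.bp_mem u f hf huf)
            (hvPve v u f hf huf)
        · exact absurd (show vp v ∈ Pe f by rw [h2]; exact R.ep_mem f hf) (hvPe v f hf)
      · rcases hc with ⟨h1, h2⟩ | ⟨h1, h2⟩
        · exact absurd h1 (hvAe v f hf)
        · exact absurd (show vp v ∈ Pe f by rw [h2]; exact R.ep_mem f hf) (hvPe v f hf)
      · rcases hc with ⟨h1, h2⟩ | ⟨h1, h2⟩
        · exact absurd h1 (hvAe v f hf)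
        · exact absurd (show vp v ∈ Pve u f by rw [h2]; exact R.bp_mem u f hf huf)
            (hvPve v u f hf huf)
    · rintro ⟨e, ⟨heEK, hve⟩, rfl⟩
      exact ⟨bpC e heEK v hve, (R.adj_bv v e (hE e heEK) hve).symm⟩
  have hfv_ep : ∀ e ∈ EK, ∀ x y : V, e = s(x, y) → x ≠ y →
      friendsIn G C (ep e) = insert (bp x e) (insert (bp y e) (Ae e)) := by
    intro e he x y hexy hxy
    have hxe : x ∈ e := by rw [hexy]; exact Sym2.mem_mk_left _ _
    have hye : y ∈ e := by rw [hexy]; exact Sym2.mem_mk_right _ _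
    ext j
    simp only [friendsIn, Finset.mem_filter, Finset.mem_insert]
    constructor
    · rintro ⟨hjC, hadj⟩
      rcases R.adj_cases _ _ hadj with ⟨u, h1, h2⟩ | ⟨f, hf, h1, h2⟩ | ⟨u, f, hf, huf, h1, h2⟩ |
        ⟨f, hf, h1, h2⟩ | ⟨u, f, hf, huf, hc⟩ | ⟨u, f, hf, huf, hc⟩ | ⟨f, hf, hc⟩ |
        ⟨u, f, hf, huf, hc⟩
      · exact absurd h1 (hePv e (hE e he) u)
      · have hfe : f = e := hPePe f hf e (hE e he) _ h1 (R.ep_mem e (hE e he))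
        subst hfe
        obtain ⟨-, hj⟩ := classPe j hjC f hf h2
        exact absurd hj.symm hadj.ne
      · exact absurd h1 (hePve e (hE e he) u f hf huf)
      · exact absurd h1 (heAe e (hE e he) f hf)
      · rcases hc with ⟨h1, h2⟩ | ⟨h1, h2⟩
        · exact absurd (show ep e ∈ Pve u f by rw [h1]; exact R.bp_mem u f hf huf)
            (hePve e (hE e he) u f hf huf)
        · exact absurd (show ep e ∈ Pv u by rw [h2]; exact R.vp_mem u) (hePv e (hE e he) u)
      · rcases hc with ⟨h1, h2⟩ | ⟨h1, h2⟩
        · exact absurd (show ep e ∈ Pve u f by rw [h1]; exact R.bp_mem u f hf huf)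
            (hePve e (hE e he) u f hf huf)
        · have hef : e = f := hPePe e (hE e he) f hf _ (R.ep_mem e (hE e he))
            (by rw [h2]; exact R.ep_mem f hf)
          subst hef
          rw [hexy] at huf
          rcases Sym2.mem_iff.1 huf with rfl | rfl
          · exact Or.inl h1
          · exact Or.inr (Or.inl h1)
      · rcases hc with ⟨h1, h2⟩ | ⟨h1, h2⟩
        · exact absurd h1 (heAe e (hE e he) f hf)
        · have hef : e = f := hPePe e (hE e he) f hf _ (R.ep_mem e (hE e he))
            (by rw [h2]; exact R.ep_mem f hf)
          subst hef
          exact Or.inr (Or.inr h1)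
      · rcases hc with ⟨h1, h2⟩ | ⟨h1, h2⟩
        · exact absurd h1 (heAe e (hE e he) f hf)
        · exact absurd (show ep e ∈ Pve u f by rw [h2]; exact R.bp_mem u f hf huf)
            (hePve e (hE e he) u f hf huf)
    · rintro (rfl | rfl | hj)
      · exact ⟨bpC e he x hxe, (R.adj_be x e (hE e he) hxe).symm⟩
      · exact ⟨bpC e he y hye, (R.adj_be y e (hE e he) hye).symm⟩
      · exact ⟨aeC e he j hj, (R.adj_ae e (hE e he) j hj).symm⟩
  have hfv_bp : ∀ e ∈ EK, ∀ v, v ∈ e →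
      friendsIn G C (bp v e) = insert (vp v) (insert (ep e) (Ae e)) := by
    intro e he v hve
    ext j
    simp only [friendsIn, Finset.mem_filter, Finset.mem_insert]
    constructor
    · rintro ⟨hjC, hadj⟩
      rcases R.adj_cases _ _ hadj with ⟨u, h1, h2⟩ | ⟨f, hf, h1, h2⟩ | ⟨u, f, hf, huf, h1, h2⟩ |
        ⟨f, hf, h1, h2⟩ | ⟨u, f, hf, huf, hc⟩ | ⟨u, f, hf, huf, hc⟩ | ⟨f, hf, hc⟩ |
        ⟨u, f, hf, huf, hc⟩
      · exact absurd h1 (hbPv v e (hE e he) hve u)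
      · exact absurd h1 (hbPe v e (hE e he) hve f hf)
      · obtain ⟨h3, h4⟩ := hPvePve v e (hE e he) hve u f hf huf _
          (R.bp_mem v e (hE e he) hve) h1
        subst h3; subst h4
        obtain ⟨-, hj⟩ := classPve j hjC v e (hE e he) hve h2
        exact absurd hj.symm hadj.ne
      · exact absurd h1 (hbAe v e (hE e he) hve f hf)
      · rcases hc with ⟨h1, h2⟩ | ⟨h1, h2⟩
        · obtain ⟨h3, h4⟩ := hPvePve v e (hE e he) hve u f hf huf _
            (R.bp_mem v e (hE e he) hve) (by rw [h1]; exact R.bp_mem u f hf huf)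
          subst h3; subst h4
          exact Or.inl h2
        · exact absurd (show bp v e ∈ Pv u by rw [h2]; exact R.vp_mem u)
            (hbPv v e (hE e he) hve u)
      · rcases hc with ⟨h1, h2⟩ | ⟨h1, h2⟩
        · obtain ⟨h3, h4⟩ := hPvePve v e (hE e he) hve u f hf huf _
            (R.bp_mem v e (hE e he) hve) (by rw [h1]; exact R.bp_mem u f hf huf)
          subst h3; subst h4
          exact Or.inr (Or.inl h2)
        · exact absurd (show bp v e ∈ Pe f by rw [h2]; exact R.ep_mem f hf)
            (hbPe v e (hE e he) hve f hf)
      · rcases hc with ⟨h1, h2⟩ | ⟨h1, h2⟩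
        · exact absurd h1 (hbAe v e (hE e he) hve f hf)
        · exact absurd (show bp v e ∈ Pe f by rw [h2]; exact R.ep_mem f hf)
            (hbPe v e (hE e he) hve f hf)
      · rcases hc with ⟨h1, h2⟩ | ⟨h1, h2⟩
        · exact absurd h1 (hbAe v e (hE e he) hve f hf)
        · obtain ⟨h3, h4⟩ := hPvePve v e (hE e he) hve u f hf huf _
            (R.bp_mem v e (hE e he) hve) (by rw [h2]; exact R.bp_mem u f hf huf)
          subst h3; subst h4
          exact Or.inr (Or.inr h1)
    · rintro (rfl | rfl | hj)
      · exact ⟨vpC v (hEK_K e he v hve), R.adj_bv v e (hE e he) hve⟩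
      · exact ⟨epC e he, R.adj_be v e (hE e he) hve⟩
      · exact ⟨aeC e he j hj, (R.adj_ab v e (hE e he) hve j hj).symm⟩
  have hfv_ae : ∀ e ∈ EK, ∀ x y : V, e = s(x, y) → x ≠ y → ∀ a ∈ Ae e,
      friendsIn G C a =
        insert (ep e) (insert (bp x e) (insert (bp y e) ((Ae e).erase a))) := by
    intro e he x y hexy hxy a ha
    have hxe : x ∈ e := by rw [hexy]; exact Sym2.mem_mk_left _ _
    have hye : y ∈ e := by rw [hexy]; exact Sym2.mem_mk_right _ _
    ext j
    simp only [friendsIn, Finset.mem_filter, Finset.mem_insert, Finset.mem_erase]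
    constructor
    · rintro ⟨hjC, hadj⟩
      rcases R.adj_cases _ _ hadj with ⟨u, h1, h2⟩ | ⟨f, hf, h1, h2⟩ | ⟨u, f, hf, huf, h1, h2⟩ |
        ⟨f, hf, h1, h2⟩ | ⟨u, f, hf, huf, hc⟩ | ⟨u, f, hf, huf, hc⟩ | ⟨f, hf, hc⟩ |
        ⟨u, f, hf, huf, hc⟩
      · exact absurd h1 (haPv e (hE e he) a ha u)
      · exact absurd h1 (haPe e (hE e he) a ha f hf)
      · exact absurd h1 (haPve e (hE e he) a ha u f hf huf)
      · have hef : e = f := hAeAe e (hE e he) f hf a ha h1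
        subst hef
        exact Or.inr (Or.inr (Or.inr ⟨hadj.ne', h2⟩))
      · rcases hc with ⟨h1, h2⟩ | ⟨h1, h2⟩
        · exact absurd (show a ∈ Pve u f by rw [h1]; exact R.bp_mem u f hf huf)
            (haPve e (hE e he) a ha u f hf huf)
        · exact absurd (show a ∈ Pv u by rw [h2]; exact R.vp_mem u) (haPv e (hE e he) a ha u)
      · rcases hc with ⟨h1, h2⟩ | ⟨h1, h2⟩
        · exact absurd (show a ∈ Pve u f by rw [h1]; exact R.bp_mem u f hf huf)
            (haPve e (hE e he) a ha u f hf huf)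
        · exact absurd (show a ∈ Pe f by rw [h2]; exact R.ep_mem f hf)
            (haPe e (hE e he) a ha f hf)
      · rcases hc with ⟨h1, h2⟩ | ⟨h1, h2⟩
        · have hef : e = f := hAeAe e (hE e he) f hf a ha h1
          subst hef
          exact Or.inl h2
        · exact absurd (show a ∈ Pe f by rw [h2]; exact R.ep_mem f hf)
            (haPe e (hE e he) a ha f hf)
      · rcases hc with ⟨h1, h2⟩ | ⟨h1, h2⟩
        · have hef : e = f := hAeAe e (hE e he) f hf a ha h1
          subst hef
          rw [hexy] at huf
          rcases Sym2.mem_iff.1 huf with rfl | rfl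
          · exact Or.inr (Or.inl h2)
          · exact Or.inr (Or.inr (Or.inl h2))
        · exact absurd (show a ∈ Pve u f by rw [h2]; exact R.bp_mem u f hf huf)
            (haPve e (hE e he) a ha u f hf huf)
    · rintro (rfl | rfl | rfl | ⟨hne, hj⟩)
      · exact ⟨epC e he, R.adj_ae e (hE e he) a ha⟩
      · exact ⟨bpC e he x hxe, R.adj_ab x e (hE e he) hxe a ha⟩
      · exact ⟨bpC e he y hye, R.adj_ab y e (hE e he) hye a ha⟩
      · exact ⟨aeC e he j hj, R.Ae_clique e (hE e he) a ha j hj (Ne.symm hne)⟩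
  have hk5ofAe : ∀ e ∈ EK, ∀ a ∈ Ae e, 5 ≤ k := by
    intro e he a ha
    have h1 : 0 < (Ae e).card := Finset.card_pos.2 ⟨a, ha⟩
    rw [R.Ae_card e (hE e he)] at h1
    omega
  have hfcard : ∀ i ∈ C, (friendsIn G C i).card = k - 1 := by
    intro i hi
    rcases (memC i).1 hi with ⟨v, hv, rfl⟩ | ⟨e, he, rfl⟩ | ⟨e, he, v, hve, rfl⟩ | ⟨e, he, hia⟩
    · have hinj2 : Set.InjOn (fun e => bp v e) ↑(EK.filter fun e => v ∈ e) := by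
        intro e hee f hff hbef
        have he' := Finset.mem_filter.1 (Finset.mem_coe.1 hee)
        have hf' := Finset.mem_filter.1 (Finset.mem_coe.1 hff)
        exact (hPvePve v e (hE e he'.1) he'.2 v f (hE f hf'.1) hf'.2 _
          (R.bp_mem v e (hE e he'.1) he'.2)
          (by simp only at hbef; rw [hbef]; exact R.bp_mem v f (hE f hf'.1) hf'.2)).2
      rw [hfv_vp v hv, Finset.card_image_of_injOn hinj2, hinc_card v hv]
    · obtain ⟨x, y, hxy, hexy⟩ := sym2cases e (hE e he)
      have hxe : x ∈ e := by rw [hexy]; exact Sym2.mem_mk_left _ _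
      have hye : y ∈ e := by rw [hexy]; exact Sym2.mem_mk_right _ _
      have hbxy : bp x e ≠ bp y e := fun hcon => hxy
        ((hPvePve x e (hE e he) hxe y e (hE e he) hye _ (R.bp_mem x e (hE e he) hxe)
          (by rw [hcon]; exact R.bp_mem y e (hE e he) hye)).1)
      rw [hfv_ep e he x y hexy hxy, Finset.card_insert_of_notMem,
        Finset.card_insert_of_notMem, R.Ae_card e (hE e he)]
      · omega
      · exact hbAe y e (hE e he) hye e (hE e he)
      · simp only [Finset.mem_insert]
        push_neg
        exact ⟨hbxy, hbAe x e (hE e he) hxe e (hE e he)⟩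
    · have hvpep : vp v ≠ ep e := fun hcon =>
        hvPe v e (hE e he) (by rw [hcon]; exact R.ep_mem e (hE e he))
      rw [hfv_bp e he v hve, Finset.card_insert_of_notMem, Finset.card_insert_of_notMem,
        R.Ae_card e (hE e he)]
      · omega
      · exact heAe e (hE e he) e (hE e he)
      · simp only [Finset.mem_insert]
        push_neg
        exact ⟨hvpep, hvAe v e (hE e he)⟩
    · obtain ⟨x, y, hxy, hexy⟩ := sym2cases e (hE e he)
      have hk5 := hk5ofAe e he i hia
      have hxe : x ∈ e := by rw [hexy]; exact Sym2.mem_mk_left _ _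
      have hye : y ∈ e := by rw [hexy]; exact Sym2.mem_mk_right _ _
      have hbxy : bp x e ≠ bp y e := fun hcon => hxy
        ((hPvePve x e (hE e he) hxe y e (hE e he) hye _ (R.bp_mem x e (hE e he) hxe)
          (by rw [hcon]; exact R.bp_mem y e (hE e he) hye)).1)
      rw [hfv_ae e he x y hexy hxy i hia, Finset.card_insert_of_notMem,
        Finset.card_insert_of_notMem, Finset.card_insert_of_notMem,
        Finset.card_erase_of_mem hia, R.Ae_card e (hE e he)]
      · omega
      · exact fun hmem => hbAe y e (hE e he) hye e (hE e he) (Finset.mem_of_mem_erase hmem)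
      · simp only [Finset.mem_insert]
        push_neg
        exact ⟨hbxy, fun hmem => hbAe x e (hE e he) hxe e (hE e he)
          (Finset.mem_of_mem_erase hmem)⟩
      · simp only [Finset.mem_insert]
        push_neg
        refine ⟨?_, ?_, fun hmem => heAe e (hE e he) e (hE e he) (Finset.mem_of_mem_erase hmem)⟩
        · exact fun hcon => hePve e (hE e he) x e (hE e he) hxe
            (by rw [hcon]; exact R.bp_mem x e (hE e he) hxe)
        · exact fun hcon => hePve e (hE e he) y e (hE e he) hye
            (by rw [hcon]; exact R.bp_mem y e (hE e he) hye)
  set M : ℤ := ((k : ℤ) - 1) * (Fintype.card N : ℤ) - ((C.card : ℤ) - (k : ℤ)) with hMdef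
  have fvC : ∀ i ∈ C, fval G C i = M := by
    intro i hi
    rw [fval_formula G C i hi, hfcard i hi, hMdef]
    have h1 : ((k - 1 : ℕ) : ℤ) = (k : ℤ) - 1 := by omega
    rw [h1]; ring
  have hfne : ∀ i ∈ C, (friendsIn G C i).Nonempty := fun i hi =>
    Finset.card_pos.1 (by rw [hfcard i hi]; omega)
  have hutilC : ∀ i ∈ C, utilMinEQ G C i = M := fun i hi => utilMinEQ_const G C M fvC i hi
  have hutilALC : ∀ i ∈ C, utilMinAL G w C i = M + w * M := fun i hi =>
    utilMinAL_const G w C M fvC i hi (hfne i hi)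
  have hkK : k ≤ C.card := by rw [hCcard]; exact Nat.le_add_right k _
  have hn3 : 3 ≤ Fintype.card N := le_trans hk (le_trans hkK (Finset.card_le_univ C))
  have hCn : (C.card : ℤ) ≤ (Fintype.card N : ℤ) := by exact_mod_cast Finset.card_le_univ C
  have hw0 : (0 : ℤ) ≤ w := le_trans (pow_nonneg (Int.natCast_nonneg _) 4) hw
  have hgadget : ∀ P : Finset N, IsCirculantGadget G (k - 1) (minK' k) P → ∀ j ∈ P,
      fval G P j = M - 1 ∧ (friendsIn G P j).Nonempty := by
    intro P hP j hj
    have hr : 2 * ((k - 1) / 2) = k - 1 := by omega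
    have hrk : (k - 1) + 1 ≤ minK' k := by
      unfold minK'
      have h := Nat.zero_le (k * Nat.choose k 2)
      generalize k * Nat.choose k 2 = q at *
      omega
    obtain ⟨hPcard, hfc, hfval⟩ := circulant_facts G (k - 1) (minK' k) hr hrk P hP j hj
    constructor
    · rw [hfval, hMdef]
      have h1 : ((k - 1 : ℕ) : ℤ) = (k : ℤ) - 1 := by omega
      have h2 : ((minK' k : ℕ) : ℤ) = (k : ℤ) * (Nat.choose k 2 : ℤ) + k + 1 := by
        unfold minK'; push_cast; ring
      have h3 : (C.card : ℤ) = (k : ℤ) + (k : ℤ) * (Nat.choose k 2 : ℤ) := by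
        rw [hCcard]; push_cast; ring
      rw [h1, h2, h3]; ring
    · exact Finset.card_pos.1 (by rw [hfc]; omega)
  have hdummy : ∀ e ∈ EK, ∀ a ∈ Ae e,
      fval G (Ae e) a = ((k : ℤ) - 4) * (Fintype.card N : ℤ) ∧
        (friendsIn G (Ae e) a).Nonempty := by
    intro e he a ha
    have hk5 := hk5ofAe e he a ha
    have hfr : ∀ x ∈ Ae e, friendsIn G (Ae e) x = (Ae e).erase x := by
      intro x hx; ext j
      simp only [friendsIn, Finset.mem_filter, Finset.mem_erase]
      constructor
      · rintro ⟨hj, hadj⟩; exact ⟨hadj.ne', hj⟩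
      · rintro ⟨hne, hj⟩; exact ⟨hj, R.Ae_clique e (hE e he) x hx j hj (Ne.symm hne)⟩
    constructor
    · rw [fval_formula G (Ae e) a ha, hfr a ha, Finset.card_erase_of_mem ha,
        R.Ae_card e (hE e he)]
      have c1 : ((k - 3 - 1 : ℕ) : ℤ) = (k : ℤ) - 4 := by omega
      have c2 : ((k - 3 : ℕ) : ℤ) = (k : ℤ) - 3 := by omega
      rw [c1, c2]; ring
    · refine Finset.card_pos.1 ?_
      rw [hfr a ha, Finset.card_erase_of_mem ha, R.Ae_card e (hE e he)]
      omega
  have hdummyval : ∀ e ∈ EK, ((k : ℤ) - 4) * (Fintype.card N : ℤ) < M := by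
    intro e he
    rw [hMdef]
    have hn3' : (3 : ℤ) ≤ (Fintype.card N : ℤ) := by exact_mod_cast hn3
    nlinarith [hCn, hn3']
  have hCne : C.Nonempty := by
    obtain ⟨v0, hv0⟩ : K.Nonempty := by
      rw [← Finset.card_pos, hKcard]; omega
    exact ⟨vp v0, vpC v0 hv0⟩
  refine ⟨hCcard, hutilC, ⟨hCne, ?_⟩, ⟨hCne, ?_⟩⟩
  · intro i hi
    rw [hutilC i hi]
    rcases (memC i).1 hi with ⟨v, hv, rfl⟩ | ⟨e, he, rfl⟩ | ⟨e, he, v, hve, rfl⟩ | ⟨e, he, hia⟩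
    · rw [hΓ.1 v (vp v) (R.vp_mem v),
        utilMinEQ_const G (Pv v) (M - 1) (fun c hc => (hgadget (Pv v) (R.circ_v v) c hc).1) _
          (R.vp_mem v)]
      exact sub_one_lt M
    · rw [hΓ.2.1 e (hE e he) (ep e) (R.ep_mem e (hE e he)),
        utilMinEQ_const G (Pe e) (M - 1)
          (fun c hc => (hgadget (Pe e) (R.circ_e e (hE e he)) c hc).1) _
          (R.ep_mem e (hE e he))]
      exact sub_one_lt M
    · rw [hΓ.2.2.1 v e (hE e he) hve (bp v e) (R.bp_mem v e (hE e he) hve),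
        utilMinEQ_const G (Pve v e) (M - 1)
          (fun c hc => (hgadget (Pve v e) (R.circ_ve v e (hE e he) hve) c hc).1) _
          (R.bp_mem v e (hE e he) hve)]
      exact sub_one_lt M
    · rw [hΓ.2.2.2 e (hE e he) i hia,
        utilMinEQ_const G (Ae e) (((k : ℤ) - 4) * (Fintype.card N : ℤ))
          (fun c hc => (hdummy e he c hc).1) i hia]
      exact hdummyval e he
  · intro i hi
    rw [hutilALC i hi]
    rcases (memC i).1 hi with ⟨v, hv, rfl⟩ | ⟨e, he, rfl⟩ | ⟨e, he, v, hve, rfl⟩ | ⟨e, he, hia⟩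
    · rw [hΓ.1 v (vp v) (R.vp_mem v),
        utilMinAL_const G w (Pv v) (M - 1) (fun c hc => (hgadget (Pv v) (R.circ_v v) c hc).1) _
          (R.vp_mem v) (hgadget (Pv v) (R.circ_v v) _ (R.vp_mem v)).2]
      nlinarith [hw0]
    · rw [hΓ.2.1 e (hE e he) (ep e) (R.ep_mem e (hE e he)),
        utilMinAL_const G w (Pe e) (M - 1)
          (fun c hc => (hgadget (Pe e) (R.circ_e e (hE e he)) c hc).1) _
          (R.ep_mem e (hE e he)) (hgadget (Pe e) (R.circ_e e (hE e he)) _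
            (R.ep_mem e (hE e he))).2]
      nlinarith [hw0]
    · rw [hΓ.2.2.1 v e (hE e he) hve (bp v e) (R.bp_mem v e (hE e he) hve),
        utilMinAL_const G w (Pve v e) (M - 1)
          (fun c hc => (hgadget (Pve v e) (R.circ_ve v e (hE e he) hve) c hc).1) _
          (R.bp_mem v e (hE e he) hve) (hgadget (Pve v e) (R.circ_ve v e (hE e he) hve) _
            (R.bp_mem v e (hE e he) hve)).2]
      nlinarith [hw0]
    · rw [hΓ.2.2.2 e (hE e he) i hia,
        utilMinAL_const G w (Ae e) (((k : ℤ) - 4) * (Fintype.card N : ℤ))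
          (fun c hc => (hdummy e he c hc).1) i hia (hdummy e he i hia).2]
      have hDM := hdummyval e he
      nlinarith [mul_nonneg hw0 (sub_nonneg.2 hDM.le)]
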